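/- Let k ≥ 1, let h be a finite list of consumers each with a flexibility level in {1,...,k} and a real virtual valuation, and suppose u* is a maximizer over U(n,y) of the objective u ↦ ∑_{j=1}^{k} (sum of the u j largest virtual valuations among level-j consumers) + G(u), where G : (Fin k → ℕ) → ℝ is nondecreasing with respect to the coordinatewise shift u ↦ u + e_{j'} − e_{j} for j < j' whenever both vectors lie in U(n,y) (i.e., G(u + e_{j'} − e_j) ≥ G(u)). Then for any j < j', every level-j' consumer whose virtual valuation is strictly greater than the u*(j)-th largest virtual valuation among level-j consumers is served under u* (i.e., its virtual valuation is among the u*(j') largest of level j'), provided u*(j) ≥ 1 and the exchange u* + e_{j'} − e_j remains in U(n,y). -/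

import Mathlib

/-- Feasible service vectors: `u j ≤ n j` and prefix-sum supply constraints. -/
def Ufeas (k : ℕ) (n y : Fin k → ℕ) : Set (Fin k → ℕ) :=
  {u | (∀ m : Fin k, u m ≤ n m) ∧
    ∀ m : Fin k, (∑ l ∈ Finset.Iic m, u l) ≤ (∑ l ∈ Finset.Iic m, y l)}

/-- Shift one unit of service from level `j` to level `j'`. -/
def shiftVec (k : ℕ) (u : Fin k → ℕ) (j j' : Fin k) : Fin k → ℕ :=
  fun l => if l = j then u l - 1 else if l = j' then u l + 1 else u l

/-- Sum of the `m` largest elements of a finite multiset of reals. -/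
noncomputable def topSum (s : Multiset ℝ) (m : ℕ) : ℝ :=
  sSup {r : ℝ | ∃ t : Multiset ℝ, t ≤ s ∧ Multiset.card t = m ∧ r = t.sum}

open List

lemma sum_take_succ' (l : List ℝ) (m : ℕ) (hm : m < l.length) :
    (l.take (m+1)).sum = (l.take m).sum + l[m] := by
  rw [List.take_succ, List.sum_append]
  simp [List.getElem?_eq_getElem hm]

lemma sublist_sum_le : ∀ {t l : List ℝ}, t <+ l → l.Pairwise (· ≥ ·) →
    t.sum ≤ (l.take t.length).sum := by
  intro t l h
  induction h with
  | slnil => intro _; simp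
  | @cons t l a h ih =>
    intro hs
    have hlen : t.length ≤ l.length := h.length_le
    have ih' := ih hs.of_cons
    cases ht : t.length with
    | zero =>
      have : t = [] := List.length_eq_zero_iff.mp ht
      simp [this]
    | succ m =>
      have hm : m < l.length := by omega
      have hma : l[m] ≤ a := List.rel_of_pairwise_cons hs (List.getElem_mem hm)
      have hgoal : t.sum ≤ ((a :: l).take (m+1)).sum := by
        rw [List.take_succ_cons, List.sum_cons]
        calc t.sum ≤ (l.take (m+1)).sum := ht ▸ ih'
          _ = (l.take m).sum + l[m] := sum_take_succ' l m hm
          _ ≤ a + (l.take m).sum := by linarith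
      exact hgoal
  | @cons_cons t l a h ih =>
    intro hs
    have := ih hs.of_cons
    simp only [List.length_cons, List.take_succ_cons, List.sum_cons]
    linarith

lemma topSum_eq (s : Multiset ℝ) (m : ℕ) (hm : m ≤ Multiset.card s) :
    topSum s m = ((s.sort (· ≥ ·)).take m).sum := by
  have hl : ↑(s.sort (· ≥ ·)) = s := Multiset.sort_eq s _
  set l := s.sort (· ≥ ·) with hldef
  have hlen : l.length = Multiset.card s := by rw [← hl]; simp
  have hsorted : l.Pairwise (· ≥ ·) := Multiset.pairwise_sort s _
  apply IsGreatest.csSup_eq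
  constructor
  · refine ⟨↑(l.take m), ?_, ?_, ?_⟩
    · rw [← hl]; exact Multiset.coe_le.mpr (List.take_sublist m l).subperm
    · simp [Multiset.coe_card, List.length_take, min_eq_left (hlen ▸ hm)]
    · simp
  · rintro r ⟨t, ht, hcard, rfl⟩
    obtain ⟨lt, hlt⟩ := Quotient.exists_rep t
    rw [← hlt] at ht hcard ⊢
    simp only [Multiset.quot_mk_to_coe] at ht hcard ⊢
    rw [← hl, Multiset.coe_le] at ht
    obtain ⟨l'', hperm, hsub⟩ := ht
    have h1 : l''.sum ≤ (l.take l''.length).sum := sublist_sum_le hsub hsorted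
    have h2 : l''.length = m := by
      rw [hperm.length_eq]
      simpa [Multiset.coe_card] using hcard
    calc (lt : Multiset ℝ).sum = lt.sum := by simp
      _ = l''.sum := (hperm.sum_eq).symm
      _ ≤ (l.take l''.length).sum := h1
      _ = (l.take m).sum := by rw [h2]

lemma get_ge_of_card_filter (l : List ℝ) (hs : l.Pairwise (· ≥ ·)) (v : ℝ) (i : ℕ)
    (hi : i < l.length) (hcnt : i + 1 ≤ (l.filter (fun x => decide (v ≤ x))).length) :
    v ≤ l[i] := by
  by_contra hlt
  push_neg at hlt
  have hdrop : ∀ x ∈ l.drop i, x < v := by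
    intro x hx
    have hsd : (l.drop i).Pairwise (· ≥ ·) := hs.sublist (List.drop_sublist i l)
    rw [List.drop_eq_getElem_cons hi] at hx hsd
    rcases List.mem_cons.mp hx with rfl | hx
    · exact hlt
    · exact lt_of_le_of_lt (List.rel_of_pairwise_cons hsd hx) hlt
  have hsplit : l.filter (fun x => decide (v ≤ x)) =
      (l.take i).filter (fun x => decide (v ≤ x)) ++ (l.drop i).filter (fun x => decide (v ≤ x)) := by
    rw [← List.filter_append, List.take_append_drop]
  have h2 : (l.drop i).filter (fun x => decide (v ≤ x)) = [] := by
    rw [List.filter_eq_nil_iff]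
    intro x hx
    simpa using not_le.mpr (hdrop x hx)
  have h3 : ((l.take i).filter (fun x => decide (v ≤ x))).length ≤ i := by
    calc ((l.take i).filter (fun x => decide (v ≤ x))).length
        ≤ (l.take i).length := List.length_filter_le _ _
      _ ≤ i := by rw [List.length_take]; omega
  rw [hsplit, List.length_append, h2] at hcnt
  simp only [List.length_nil] at hcnt
  omega

lemma card_filter_of_get (l : List ℝ) (hs : l.Pairwise (· ≥ ·)) (v : ℝ) (i : ℕ)
    (hi : i < l.length) (hv : v ≤ l[i]) :
    i + 1 ≤ (l.filter (fun x => decide (v ≤ x))).length := by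
  have hall : ∀ x ∈ l.take (i+1), v ≤ x := by
    intro x hx
    obtain ⟨idx, hidx, rfl⟩ := List.mem_iff_getElem.mp hx
    have hidx2 : idx < l.length := by rw [List.length_take] at hidx; omega
    rw [List.getElem_take]
    have hidx' : idx < i + 1 := by rw [List.length_take] at hidx; omega
    rcases Nat.lt_or_ge idx i with hlt2 | hge
    · have hrel := hs.rel_get_of_lt (a := ⟨idx, hidx2⟩) (b := ⟨i, hi⟩) (by simpa using hlt2)
      simp only [List.get_eq_getElem] at hrel
      exact le_trans hv hrel
    · have : idx = i := by omega
      subst this; exact hv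
  have hsub : l.take (i+1) <+ l.filter (fun x => decide (v ≤ x)) := by
    have h1 := (List.take_sublist (i+1) l).filter (fun x => decide (v ≤ x))
    rwa [List.filter_eq_self.mpr (fun x hx => by simpa using hall x hx)] at h1
  have hle := hsub.length_le
  rw [List.length_take] at hle
  omega



/-- abstraction of Proposition 1: Let `u*` maximize over `U(n,y)` the
objective `u ↦ ∑_j (sum of the u j largest level-j virtual valuations) + G u`, where `G` is
nondecreasing under the exchange `u ↦ u − e_j + e_{j'}` for `j < j'` (whenever both lie in
`U(n,y)`).  Then for `j < j'`, any level-`j'` consumer `c` whose virtual valuation is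
strictly greater than the `u*(j)`-th largest level-`j` virtual valuation (i.e. fewer than
`u*(j)` level-`j` valuations are `≥ c.2`) is served under `u*` (i.e. fewer than `u*(j')`
level-`j'` valuations strictly exceed `c.2`), provided `u*(j) ≥ 1` and the exchanged vector
remains feasible. -/
theorem stmt15 (k : ℕ) (hk : 1 ≤ k) (h : Multiset (Fin k × ℝ)) (y n : Fin k → ℕ)
    (hn : ∀ j : Fin k, n j = Multiset.card (h.filter (fun c => c.1 = j)))
    (G : (Fin k → ℕ) → ℝ)
    (hG : ∀ u : Fin k → ℕ, ∀ j j' : Fin k, j < j' →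
      u ∈ Ufeas k n y → shiftVec k u j j' ∈ Ufeas k n y → G u ≤ G (shiftVec k u j j'))
    (ustar : Fin k → ℕ) (hmem : ustar ∈ Ufeas k n y)
    (hopt : ∀ u ∈ Ufeas k n y,
      (∑ j : Fin k, topSum ((h.filter (fun c => c.1 = j)).map Prod.snd) (u j)) + G u ≤
      (∑ j : Fin k, topSum ((h.filter (fun c => c.1 = j)).map Prod.snd) (ustar j)) + G ustar)
    (j j' : Fin k) (hjj : j < j') (hj1 : 1 ≤ ustar j)
    (hex : shiftVec k ustar j j' ∈ Ufeas k n y)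
    (c : Fin k × ℝ) (hc : c ∈ h) (hcl : c.1 = j')
    (hcv : Multiset.card
        (((h.filter (fun d => d.1 = j)).map Prod.snd).filter (fun x => c.2 ≤ x))
      < ustar j) :
    Multiset.card
        (((h.filter (fun d => d.1 = j')).map Prod.snd).filter (fun x => c.2 < x))
      < ustar j' := by
  classical
  by_contra hcon
  push_neg at hcon
  set A : Multiset ℝ := (h.filter (fun d => d.1 = j)).map Prod.snd with hA
  set B : Multiset ℝ := (h.filter (fun d => d.1 = j')).map Prod.snd with hB
  have hjne : j ≠ j' := ne_of_lt hjj
  have hcardA : Multiset.card A = n j := by rw [hA, Multiset.card_map, hn]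
  have hcardB : Multiset.card B = n j' := by rw [hB, Multiset.card_map, hn]
  have haA : ustar j ≤ Multiset.card A := hcardA ▸ hmem.1 j
  set u' := shiftVec k ustar j j' with hu'
  have hu'j : u' j = ustar j - 1 := by simp [hu', shiftVec]
  have hu'j' : u' j' = ustar j' + 1 := by simp [hu', shiftVec, hjne.symm]
  have hu'other : ∀ m, m ≠ j → m ≠ j' → u' m = ustar m := by
    intro m h1 h2; simp [hu', shiftVec, h1, h2]
  have hbB : ustar j' + 1 ≤ Multiset.card B := by
    rw [hcardB]; have := hex.1 j'; rwa [hu'j'] at this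
  -- sorted lists
  have hAl : ((A.sort (· ≥ ·) : List ℝ) : Multiset ℝ) = A := Multiset.sort_eq A _
  have hBl : ((B.sort (· ≥ ·) : List ℝ) : Multiset ℝ) = B := Multiset.sort_eq B _
  set lA := A.sort (· ≥ ·) with hlA
  set lB := B.sort (· ≥ ·) with hlB
  have hsA : lA.Pairwise (· ≥ ·) := Multiset.pairwise_sort _ _
  have hsB : lB.Pairwise (· ≥ ·) := Multiset.pairwise_sort _ _
  have hlenA : lA.length = Multiset.card A := by rw [← hAl, Multiset.coe_card]
  have hlenB : lB.length = Multiset.card B := by rw [← hBl, Multiset.coe_card]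
  -- filter card conversions
  have hfA : Multiset.card (A.filter (fun x => c.2 ≤ x)) =
      (lA.filter (fun x => decide (c.2 ≤ x))).length := by
    conv_lhs => rw [← hAl]
    rw [Multiset.filter_coe, Multiset.coe_card]
  have hfB : Multiset.card (B.filter (fun x => c.2 ≤ x)) =
      (lB.filter (fun x => decide (c.2 ≤ x))).length := by
    conv_lhs => rw [← hBl]
    rw [Multiset.filter_coe, Multiset.coe_card]
  have hia : ustar j - 1 < lA.length := by rw [hlenA]; omega
  have hib : ustar j' < lB.length := by rw [hlenB]; omega
  -- the (ustar j)-th largest level-j valuation is < c.2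
  have hgetA : lA[ustar j - 1] < c.2 := by
    by_contra hge
    push_neg at hge
    have := card_filter_of_get lA hsA c.2 (ustar j - 1) hia hge
    rw [← hfA] at this
    omega
  -- card (B.filter (c.2 ≤ ·)) ≥ ustar j' + 1
  have hc2B : c.2 ∈ B := by
    rw [hB]
    exact Multiset.mem_map.mpr ⟨c, Multiset.mem_filter.mpr ⟨hc, hcl⟩, rfl⟩
  have hcountB : ustar j' + 1 ≤ Multiset.card (B.filter (fun x => c.2 ≤ x)) := by
    have hsplit := Multiset.filter_add_filter (p := fun x => c.2 < x) (fun x => x = c.2) B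
    have hzero : B.filter (fun x => (c.2 < x) ∧ x = c.2) = 0 := by
      rw [Multiset.filter_eq_nil]
      rintro x hx ⟨h1, rfl⟩
      exact lt_irrefl _ h1
    have hcongr : B.filter (fun x => (c.2 < x) ∨ x = c.2) = B.filter (fun x => c.2 ≤ x) := by
      apply Multiset.filter_congr
      intro x hx
      constructor
      · rintro (h1 | rfl)
        · exact le_of_lt h1
        · exact le_refl _
      · intro h1
        rcases eq_or_lt_of_le h1 with h2 | h2
        · exact Or.inr h2.symm
        · exact Or.inl h2
    have hmemf : c.2 ∈ B.filter (fun x => x = c.2) :=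
      Multiset.mem_filter.mpr ⟨hc2B, rfl⟩
    have hone : 0 < Multiset.card (B.filter (fun x => x = c.2)) :=
      Multiset.card_pos.mpr (fun hz => by simp [hz] at hmemf)
    have hcards := congrArg Multiset.card hsplit
    rw [Multiset.card_add, Multiset.card_add, hzero, hcongr] at hcards
    simp at hcards
    omega
  have hgetB : c.2 ≤ lB[ustar j'] :=
    get_ge_of_card_filter lB hsB c.2 (ustar j') hib (by rw [← hfB]; exact hcountB)
  -- topSum values
  have hTA : topSum A (ustar j) = (lA.take (ustar j - 1)).sum + lA[ustar j - 1] := by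
    have hstep := sum_take_succ' lA (ustar j - 1) hia
    rw [show ustar j - 1 + 1 = ustar j from by omega] at hstep
    rw [topSum_eq A (ustar j) haA, ← hlA, hstep]
  have hTA' : topSum A (ustar j - 1) = (lA.take (ustar j - 1)).sum := by
    rw [topSum_eq A _ (by omega), ← hlA]
  have hTB : topSum B (ustar j') = (lB.take (ustar j')).sum := by
    rw [topSum_eq B _ (by omega), ← hlB]
  have hTB' : topSum B (ustar j' + 1) = (lB.take (ustar j')).sum + lB[ustar j'] := by
    rw [topSum_eq B _ (by omega), ← hlB, sum_take_succ' lB _ hib]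
  -- objective comparison
  set F : Fin k → ℝ := fun m => topSum ((h.filter (fun d => d.1 = m)).map Prod.snd) (ustar m)
    with hF
  set F' : Fin k → ℝ := fun m => topSum ((h.filter (fun d => d.1 = m)).map Prod.snd) (u' m)
    with hF'
  have hopt' : (∑ m : Fin k, F' m) + G u' ≤ (∑ m : Fin k, F m) + G ustar := hopt u' hex
  have hGle : G ustar ≤ G u' := hG ustar j j' hjj hmem hex
  have hsumle : (∑ m : Fin k, F' m) ≤ ∑ m : Fin k, F m := by linarith
  have hdiff : (∑ m : Fin k, F' m) - (∑ m : Fin k, F m) =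
      (F' j - F j) + (F' j' - F j') := by
    rw [← Finset.sum_sub_distrib]
    have hsub : ∑ m : Fin k, (F' m - F m) = ∑ m ∈ ({j, j'} : Finset (Fin k)), (F' m - F m) := by
      symm
      apply Finset.sum_subset (Finset.subset_univ _)
      intro m _ hm
      simp only [Finset.mem_insert, Finset.mem_singleton, not_or] at hm
      rw [hF', hF]
      simp only
      rw [hu'other m hm.1 hm.2]
      ring
    rw [hsub, Finset.sum_pair hjne]
  have hFj : F j = (lA.take (ustar j - 1)).sum + lA[ustar j - 1] := by
    rw [hF]; simp only; rw [← hA, hTA]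
  have hF'j : F' j = (lA.take (ustar j - 1)).sum := by
    rw [hF']; simp only; rw [← hA, hu'j, hTA']
  have hFj' : F j' = (lB.take (ustar j')).sum := by
    rw [hF]; simp only; rw [← hB, hTB]
  have hF'j' : F' j' = (lB.take (ustar j')).sum + lB[ustar j'] := by
    rw [hF']; simp only; rw [← hB, hu'j', hTB']
  rw [hFj, hF'j, hFj', hF'j'] at hdiff
  have : (0:ℝ) < (∑ m : Fin k, F' m) - (∑ m : Fin k, F m) := by
    rw [hdiff]; linarith
  linarith
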